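/- Let g_1, g_2, … be positive real numbers, and let J₁ = {p, …, q}, J₂ = {q+1, …, t}, J₃ = {t+1, …, r} be three consecutive finite intervals of positive integers with |J₂| ≤ |J₃| ≤ |J₁|. Assume that for all x ∈ J₁ and y ∈ J₃ with y − x + 1 > |J₁|, one has g_x + g_{x+1} + ⋯ + g_y > 1/2. Then #{(x, y) ∈ J₁ × J₃ : g_x + g_{x+1} + ⋯ + g_y > 1/2} ≥ (1/2)·|J₃|². -/

import Mathlib

open Finset

open scoped Classical in
/-- Let `g_1, g_2, …` be positive reals and `J₁ = {p,…,q}`, `J₂ = {q+1,…,t}`, `J₃ = {t+1,…,r}`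
three consecutive intervals of positive integers with `|J₂| ≤ |J₃| ≤ |J₁|`. If
`g x + ⋯ + g y > 1/2` whenever `x ∈ J₁`, `y ∈ J₃` and `y − x + 1 > |J₁|`, then
`#{(x,y) ∈ J₁ × J₃ : g x + ⋯ + g y > 1/2} ≥ (1/2)·|J₃|²`. -/
theorem stmt_13 (g : ℕ → ℝ) (hg : ∀ n, 1 ≤ n → 0 < g n)
    (p q t r : ℕ) (hp : 1 ≤ p) (hpq : p ≤ q) (hqt : q < t) (htr : t < r)
    (hsize23 : t - q ≤ r - t) (hsize31 : r - t ≤ q + 1 - p)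
    (h : ∀ x ∈ Finset.Icc p q, ∀ y ∈ Finset.Icc (t + 1) r,
      q + 1 - p < y - x + 1 → 1 / 2 < ∑ i ∈ Finset.Icc x y, g i) :
    1 / 2 * ((r - t : ℕ) : ℝ) ^ 2 ≤
      (((Finset.Icc p q ×ˢ Finset.Icc (t + 1) r).filter
        (fun xy => 1 / 2 < ∑ i ∈ Finset.Icc xy.1 xy.2, g i)).card : ℝ) := by
  classical
  set m := r - t with hm
  set S := ((Finset.Icc p q ×ˢ Finset.Icc (t + 1) r).filter
        (fun xy => 1 / 2 < ∑ i ∈ Finset.Icc xy.1 xy.2, g i)) with hS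
  set P : Finset (Σ _ : ℕ, ℕ) := (Finset.range m).sigma (fun j => Finset.range (j + 1)) with hP
  have hcardP : P.card = ∑ j ∈ Finset.range m, (j + 1) := by
    simp [hP, Finset.card_sigma]
  have hPS : P.card ≤ S.card := by
    apply Finset.card_le_card_of_injOn (fun x => (p + x.2, t + 1 + x.1))
    · intro x hx
      simp only [Finset.mem_coe, hP, Finset.mem_sigma, Finset.mem_range] at hx
      obtain ⟨hj, hi⟩ := hx
      have hxmem : p + x.2 ∈ Finset.Icc p q := by
        simp only [Finset.mem_Icc]; omega
      have hymem : t + 1 + x.1 ∈ Finset.Icc (t + 1) r := by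
        simp only [Finset.mem_Icc]; omega
      simp only [Finset.mem_coe, hS, Finset.mem_filter, Finset.mem_product]
      refine ⟨⟨hxmem, hymem⟩, ?_⟩
      exact h _ hxmem _ hymem (by omega)
    · intro a _ b _ hab
      simp only [Prod.mk.injEq] at hab
      obtain ⟨h1, h2⟩ := hab
      exact Sigma.ext (by omega) (by simpa using (by omega : a.2 = b.2))
  have hsum : m * m ≤ 2 * ∑ j ∈ Finset.range m, (j + 1) := by
    have h1 : ∑ j ∈ Finset.range m, (j + 1) = ∑ j ∈ Finset.range (m + 1), j := by
      rw [Finset.sum_range_succ']; simp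
    have h2 := Finset.sum_range_id_mul_two (m + 1)
    simp only [Nat.add_sub_cancel] at h2
    calc m * m ≤ (m + 1) * m := Nat.mul_le_mul_right _ (Nat.le_succ m)
      _ = (∑ j ∈ Finset.range (m + 1), j) * 2 := h2.symm
      _ = 2 * ∑ j ∈ Finset.range m, (j + 1) := by rw [h1]; ring
  have hfin : m * m ≤ 2 * S.card := by omega
  have : ((m * m : ℕ) : ℝ) ≤ ((2 * S.card : ℕ) : ℝ) := by exact_mod_cast hfin
  push_cast at this
  nlinarith [this]
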